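/- Let n points lie on the unit circle in R^2 (n ≥ 2). Then the minimum pairwise chordal distance is at most 2 sin(π/n), with equality if and only if the points are uniformly spaced (all consecutive angular gaps equal 2π/n). -/

import Mathlib

open Real

/-- Chordal distance between the points of the unit circle in `ℝ²`
with angles `a` and `b`. -/
noncomputable def chord (a b : ℝ) : ℝ :=
  Real.sqrt ((Real.cos a - Real.cos b) ^ 2 + (Real.sin a - Real.sin b) ^ 2)

lemma chord_eq (a b : ℝ) : chord a b = 2 * |Real.sin ((b - a) / 2)| := by
  unfold chord
  have h1 : Real.sin ((b - a)/2) ^ 2 = 1 / 2 - Real.cos (b - a) / 2 := by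
    have := Real.sin_sq_eq_half_sub ((b - a) / 2)
    rwa [show 2 * ((b - a) / 2) = b - a by ring] at this
  have h2 : Real.cos (b - a) = Real.cos b * Real.cos a + Real.sin b * Real.sin a :=
    Real.cos_sub b a
  have h : (Real.cos a - Real.cos b) ^ 2 + (Real.sin a - Real.sin b) ^ 2
      = (2 * Real.sin ((b - a)/2)) ^ 2 := by
    nlinarith [Real.sin_sq_add_cos_sq a, Real.sin_sq_add_cos_sq b]
  rw [h, Real.sqrt_sq_eq_abs, abs_mul]
  norm_num

lemma chord_comm (a b : ℝ) : chord a b = chord b a := by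
  unfold chord; ring_nf

lemma chord_eq_sin {a b : ℝ} (h1 : a ≤ b) (h2 : b - a ≤ 2 * π) :
    chord a b = 2 * Real.sin ((b - a) / 2) := by
  rw [chord_eq, abs_of_nonneg]
  apply Real.sin_nonneg_of_nonneg_of_le_pi <;> linarith

lemma sin_mono' {u v : ℝ} (hu : 0 ≤ u) (huv : u ≤ v) (hv : v ≤ π / 2) :
    Real.sin u ≤ Real.sin v := by
  have := Real.pi_pos
  exact Real.strictMonoOn_sin.monotoneOn ⟨by linarith, by linarith⟩ ⟨by linarith, hv⟩ huv

lemma sin_smono' {u v : ℝ} (hu : 0 ≤ u) (huv : u < v) (hv : v ≤ π / 2) :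
    Real.sin u < Real.sin v := by
  have := Real.pi_pos
  exact Real.strictMonoOn_sin ⟨by linarith, by linarith⟩ ⟨by linarith, hv⟩ huv

lemma sin_ge_interval {c y : ℝ} (hc0 : 0 ≤ c) (hc : c ≤ π / 2) (h1 : c ≤ y) (h2 : y ≤ π - c) :
    Real.sin c ≤ Real.sin y := by
  rcases le_or_gt y (π / 2) with h | h
  · exact sin_mono' hc0 h1 h
  · rw [show y = π - (π - y) by ring, Real.sin_pi_sub]
    exact sin_mono' hc0 (by linarith) (by linarith)

lemma gap_key (n : ℕ) (hn : 2 ≤ n) (θ : Fin n → ℝ) {x : ℝ}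
    (h : ∀ k, ∀ hk : k + 1 < n, x ≤ θ ⟨k + 1, hk⟩ - θ ⟨k, by omega⟩) :
    ((n : ℝ) - 1) * x ≤ θ ⟨n - 1, Nat.sub_lt (lt_of_lt_of_le two_pos hn) Nat.one_pos⟩ - θ ⟨0, lt_of_lt_of_le two_pos hn⟩ ∧
    (θ ⟨n - 1, Nat.sub_lt (lt_of_lt_of_le two_pos hn) Nat.one_pos⟩ - θ ⟨0, lt_of_lt_of_le two_pos hn⟩ ≤ ((n : ℝ) - 1) * x →
      ∀ k, ∀ hk : k + 1 < n, θ ⟨k + 1, hk⟩ - θ ⟨k, by omega⟩ = x) := by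
  set f : ℕ → ℝ := fun i => θ ⟨min i (n - 1), by omega⟩ with hf
  have htel : ∑ i ∈ Finset.range (n - 1), (f (i + 1) - f i)
      = θ ⟨n - 1, Nat.sub_lt (lt_of_lt_of_le two_pos hn) Nat.one_pos⟩ - θ ⟨0, lt_of_lt_of_le two_pos hn⟩ := by
    rw [Finset.sum_range_sub f]
    have e1 : f (n - 1) = θ ⟨n - 1, Nat.sub_lt (lt_of_lt_of_le two_pos hn) Nat.one_pos⟩ := by simp only [hf, Nat.min_self]
    have e2 : f 0 = θ ⟨0, lt_of_lt_of_le two_pos hn⟩ := by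
      simp only [hf]
      congr 1
    rw [e1, e2]
  have hterm : ∀ i ∈ Finset.range (n - 1), x ≤ f (i + 1) - f i := by
    intro i hi
    simp only [Finset.mem_range] at hi
    have h1 : min (i + 1) (n - 1) = i + 1 := by omega
    have h2 : min i (n - 1) = i := by omega
    simp only [hf, h1, h2]
    exact h i (by omega)
  have hconst : ∑ _i ∈ Finset.range (n - 1), x = ((n : ℝ) - 1) * x := by
    rw [Finset.sum_const, Finset.card_range, nsmul_eq_mul]
    congr 1
    push_cast [Nat.cast_sub (by omega : 1 ≤ n)]
    ring
  have hle : ((n : ℝ) - 1) * x ≤ θ ⟨n - 1, Nat.sub_lt (lt_of_lt_of_le two_pos hn) Nat.one_pos⟩ - θ ⟨0, lt_of_lt_of_le two_pos hn⟩ := by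
    rw [← htel, ← hconst]
    exact Finset.sum_le_sum hterm
  refine ⟨hle, fun hub k hk => ?_⟩
  have heq : ∑ _i ∈ Finset.range (n - 1), x = ∑ i ∈ Finset.range (n - 1), (f (i + 1) - f i) := by
    rw [htel, hconst]
    linarith
  have := (Finset.sum_eq_sum_iff_of_le hterm).mp heq k (by simp; omega)
  have h1 : min (k + 1) (n - 1) = k + 1 := by omega
  have h2 : min k (n - 1) = k := by omega
  simp only [hf, h1, h2] at this
  linarith [this]

lemma gap_eq (n : ℕ) (θ : Fin n → ℝ) {x : ℝ}
    (h : ∀ k, ∀ hk : k + 1 < n, θ ⟨k + 1, hk⟩ - θ ⟨k, by omega⟩ = x) :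
    ∀ j, ∀ hj : j < n, ∀ i, ∀ _hij : i ≤ j, θ ⟨j, hj⟩ - θ ⟨i, by omega⟩ = ((j : ℝ) - i) * x := by
  intro j
  induction j with
  | zero => intro hj i hi; interval_cases i; simp
  | succ m ih =>
    intro hj i hi
    rcases eq_or_lt_of_le hi with rfl | hi'
    · simp
    · have hi2 : i ≤ m := by omega
      have := ih (by omega) i hi2
      have h2 := h m hj
      push_cast
      push_cast at this
      linarith

set_option maxHeartbeats 1000000 in
theorem circle_code_optimal (n : ℕ) (hn : 2 ≤ n) (θ : Fin n → ℝ)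
    (hmono : Monotone θ) (hrange : θ ⟨n - 1, by omega⟩ - θ ⟨0, by omega⟩ < 2 * π) :
    (∃ i j : Fin n, i ≠ j ∧ chord (θ i) (θ j) ≤ 2 * Real.sin (π / n)) ∧
    (IsLeast {s : ℝ | ∃ i j : Fin n, i ≠ j ∧ s = chord (θ i) (θ j)}
        (2 * Real.sin (π / n)) ↔
      ((∀ k : Fin n, ∀ h : (k : ℕ) + 1 < n,
          θ ⟨(k : ℕ) + 1, h⟩ - θ k = 2 * π / n) ∧
        θ ⟨0, by omega⟩ + 2 * π - θ ⟨n - 1, by omega⟩ = 2 * π / n)) := by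
  have hπ := Real.pi_pos
  have hnR : (2 : ℝ) ≤ (n : ℝ) := by exact_mod_cast hn
  have hnpos : (0 : ℝ) < n := by linarith
  set x : ℝ := 2 * π / n with hx
  have hxpos : 0 < x := by positivity
  have hnx : (n : ℝ) * x = 2 * π := by rw [hx]; field_simp
  have hhalf : x / 2 = π / n := by rw [hx]; ring
  have hπn2 : π / (n : ℝ) ≤ π / 2 := by
    rw [div_le_div_iff₀ hnpos (by norm_num)]
    nlinarith
  have hπn0 : (0 : ℝ) < π / n := by positivity
  have hx2π : x ≤ 2 * π := by
    rw [hx, div_le_iff₀ hnpos]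
    nlinarith
  have hg0 : ∀ k, ∀ hk : k + 1 < n, (0:ℝ) ≤ θ ⟨k + 1, hk⟩ - θ ⟨k, by omega⟩ := by
    intro k hk
    have : (⟨k, by omega⟩ : Fin n) ≤ ⟨k + 1, hk⟩ := by simp [Fin.le_def]
    linarith [hmono this]
  have hD0 : (0:ℝ) ≤ θ ⟨n - 1, by omega⟩ - θ ⟨0, by omega⟩ := by
    have : (⟨0, by omega⟩ : Fin n) ≤ ⟨n - 1, by omega⟩ := by simp [Fin.le_def]
    linarith [hmono this]
  -- chord between adjacent points with gap ≤ x
  have adj_chord : ∀ k, ∀ hk : k + 1 < n,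
      chord (θ ⟨k, by omega⟩) (θ ⟨k + 1, hk⟩)
        = 2 * Real.sin ((θ ⟨k + 1, hk⟩ - θ ⟨k, by omega⟩) / 2) := by
    intro k hk
    apply chord_eq_sin
    · have : (⟨k, by omega⟩ : Fin n) ≤ ⟨k + 1, hk⟩ := by simp [Fin.le_def]
      exact hmono this
    · have h1 : θ ⟨k + 1, hk⟩ ≤ θ ⟨n - 1, by omega⟩ := hmono (by simp [Fin.le_def]; omega)
      have h2 : θ ⟨0, by omega⟩ ≤ θ ⟨k, by omega⟩ := hmono (by simp [Fin.le_def])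
      linarith
  have wrap_chord : chord (θ ⟨0, by omega⟩) (θ ⟨n - 1, by omega⟩)
      = 2 * Real.sin ((θ ⟨n - 1, by omega⟩ - θ ⟨0, by omega⟩) / 2) := by
    apply chord_eq_sin
    · exact hmono (by simp [Fin.le_def])
    · linarith
  have hne01 : (⟨0, by omega⟩ : Fin n) ≠ ⟨n - 1, by omega⟩ := by
    simp only [ne_eq, Fin.mk.injEq]
    omega
  constructor
  · -- existence
    by_cases hc : ∃ k, ∃ hk : k + 1 < n, θ ⟨k + 1, hk⟩ - θ ⟨k, by omega⟩ ≤ x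
    · obtain ⟨k, hk, hle⟩ := hc
      refine ⟨⟨k, by omega⟩, ⟨k + 1, hk⟩, by simp [Fin.ext_iff], ?_⟩
      rw [adj_chord k hk]
      have hs : Real.sin ((θ ⟨k + 1, hk⟩ - θ ⟨k, by omega⟩) / 2) ≤ Real.sin (π / n) := by
        apply sin_mono' _ _ hπn2
        · linarith [hg0 k hk]
        · rw [← hhalf]; linarith
      linarith
    · push_neg at hc
      have hall : ∀ k, ∀ hk : k + 1 < n, x ≤ θ ⟨k + 1, hk⟩ - θ ⟨k, by omega⟩ :=
        fun k hk => (hc k hk).le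
      have hkey := (gap_key n hn θ hall).1
      refine ⟨⟨0, by omega⟩, ⟨n - 1, by omega⟩, hne01, ?_⟩
      rw [wrap_chord]
      set D := θ ⟨n - 1, by omega⟩ - θ ⟨0, by omega⟩ with hD
      rw [show D / 2 = π - (π - D / 2) by ring, Real.sin_pi_sub]
      have h1 : ((n : ℝ) - 1) * x = 2 * π - x := by linarith [hnx]
      have := sin_mono' (show (0:ℝ) ≤ π - D / 2 by linarith)
        (show π - D / 2 ≤ π / n by rw [← hhalf]; linarith) hπn2
      linarith
  · constructor
    · -- IsLeast → uniform
      intro hleast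
      have hge : ∀ k, ∀ hk : k + 1 < n, x ≤ θ ⟨k + 1, hk⟩ - θ ⟨k, by omega⟩ := by
        intro k hk
        by_contra hlt
        push_neg at hlt
        have hmem : chord (θ ⟨k, by omega⟩) (θ ⟨k + 1, hk⟩) ∈
            {s : ℝ | ∃ i j : Fin n, i ≠ j ∧ s = chord (θ i) (θ j)} :=
          ⟨⟨k, by omega⟩, ⟨k + 1, hk⟩, by simp [Fin.ext_iff], rfl⟩
        have hub := hleast.2 hmem
        rw [adj_chord k hk] at hub
        have hs : Real.sin ((θ ⟨k + 1, hk⟩ - θ ⟨k, by omega⟩) / 2) < Real.sin (π / n) := by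
          apply sin_smono' _ _ hπn2
          · linarith [hg0 k hk]
          · rw [← hhalf]; linarith
        linarith
      have hDle : θ ⟨n - 1, by omega⟩ - θ ⟨0, by omega⟩ ≤ ((n : ℝ) - 1) * x := by
        by_contra hgt
        push_neg at hgt
        have hmem : chord (θ ⟨0, by omega⟩) (θ ⟨n - 1, by omega⟩) ∈
            {s : ℝ | ∃ i j : Fin n, i ≠ j ∧ s = chord (θ i) (θ j)} :=
          ⟨⟨0, by omega⟩, ⟨n - 1, by omega⟩, hne01, rfl⟩
        have hub := hleast.2 hmem
        rw [wrap_chord] at hub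
        set D := θ ⟨n - 1, by omega⟩ - θ ⟨0, by omega⟩ with hD
        rw [show D / 2 = π - (π - D / 2) by ring, Real.sin_pi_sub] at hub
        have h1 : ((n : ℝ) - 1) * x = 2 * π - x := by linarith [hnx]
        have := sin_smono' (show (0:ℝ) ≤ π - D / 2 by linarith)
          (show π - D / 2 < π / n by rw [← hhalf]; linarith) hπn2
        linarith
      obtain ⟨hge1, hforce⟩ := gap_key n hn θ hge
      have hgaps := hforce hDle
      refine ⟨fun k h => hgaps k.val h, ?_⟩
      have hD : θ ⟨n - 1, by omega⟩ - θ ⟨0, by omega⟩ = ((n : ℝ) - 1) * x :=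
        le_antisymm hDle hge1
      have h1 : ((n : ℝ) - 1) * x = 2 * π - x := by linarith [hnx]
      linarith
    · -- uniform → IsLeast
      rintro ⟨hgapsF, hwrap⟩
      have hgaps : ∀ k, ∀ hk : k + 1 < n, θ ⟨k + 1, hk⟩ - θ ⟨k, by omega⟩ = x := by
        intro k hk
        exact hgapsF ⟨k, by omega⟩ hk
      constructor
      · refine ⟨⟨0, by omega⟩, ⟨1, by omega⟩, by simp [Fin.ext_iff], ?_⟩
        have := hgaps 0 (by omega)
        rw [adj_chord 0 (by omega), this, hhalf]
      · rintro s ⟨i, j, hij, rfl⟩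
        have main : ∀ i j : Fin n, i < j → 2 * Real.sin (π / n) ≤ chord (θ i) (θ j) := by
          intro i j hij
          have hji : (i : ℕ) ≤ (j : ℕ) := le_of_lt hij
          have hd := gap_eq n θ hgaps j.val j.isLt i.val hji
          have hjn : (j : ℕ) ≤ n - 1 := by omega
          have hjR : ((j : ℕ) : ℝ) - ((i : ℕ) : ℝ) ≤ (n : ℝ) - 1 := by
            have : ((j : ℕ) : ℝ) ≤ (n : ℝ) - 1 := by
              have : ((j:ℕ) : ℝ) ≤ ((n - 1 : ℕ) : ℝ) := by exact_mod_cast hjn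
              rwa [Nat.cast_sub (by omega), Nat.cast_one] at this
            have hi0 : (0:ℝ) ≤ ((i : ℕ) : ℝ) := by positivity
            linarith
          have h1R : (1 : ℝ) ≤ ((j : ℕ) : ℝ) - ((i : ℕ) : ℝ) := by
            have : (i : ℕ) + 1 ≤ (j : ℕ) := hij
            have := (Nat.cast_le (α := ℝ)).mpr this
            push_cast at this
            linarith
          set m : ℝ := ((j : ℕ) : ℝ) - ((i : ℕ) : ℝ) with hm
          have hm1 : (0:ℝ) ≤ m - 1 := by linarith
          have hm2 : (0:ℝ) ≤ (n : ℝ) - 1 - m := by linarith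
          have hDij : θ j - θ i = m * x := hd
          have hDle2π : θ j - θ i ≤ 2 * π := by
            rw [hDij]
            nlinarith [mul_nonneg hm2 hxpos.le]
          have hDij0 : θ i ≤ θ j := hmono hij.le
          rw [chord_eq_sin hDij0 hDle2π, hDij]
          have hy1 : π / n ≤ m * x / 2 := by
            rw [← hhalf]
            nlinarith [mul_nonneg hm1 hxpos.le]
          have hy2 : m * x / 2 ≤ π - π / n := by
            rw [← hhalf]
            nlinarith [mul_nonneg hm2 hxpos.le]
          have := sin_ge_interval hπn0.le hπn2 hy1 hy2
          linarith
        rcases lt_or_gt_of_ne hij with h | h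
        · exact main i j h
        · rw [chord_comm]
          exact main j i h
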